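/- The 6-dimensional hypercube Q_6 does not admit three completely independent spanning trees. -/

import Mathlib

open SimpleGraph

/-- `T` is a spanning tree of `G`: a subgraph of `G` (on the same vertex set) that is a tree. -/
def IsSpanningTreeOf {V : Type*} (G T : SimpleGraph V) : Prop :=
  T ≤ G ∧ T.IsTree

/-- A family of spanning trees of `G` are *completely independent* if for every pair of
distinct vertices `x ≠ y` and distinct indices `i ≠ j`, the (unique) paths from `x` to `y`
in `T i` and `T j` share no edges, and share no vertices except `x` and `y`. -/
def AreCISTs {V : Type*} {k : ℕ} (G : SimpleGraph V) (T : Fin k → SimpleGraph V) : Prop :=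
  (∀ i, IsSpanningTreeOf G (T i)) ∧
  ∀ x y : V, x ≠ y → ∀ i j : Fin k, i ≠ j →
    ∀ p : (T i).Walk x y, ∀ q : (T j).Walk x y, p.IsPath → q.IsPath →
      (∀ e ∈ p.edges, e ∉ q.edges) ∧
      (∀ v ∈ p.support, v ∈ q.support → v = x ∨ v = y)

/-- The `n`-dimensional hypercube: vertices are functions `Fin n → ZMod 2`, adjacent iff
they differ in exactly one coordinate. -/
def hypercube (n : ℕ) : SimpleGraph (Fin n → ZMod 2) where
  Adj x y := hammingDist x y = 1
  symm := ⟨fun x y h => by change hammingDist x y = 1 at h; change hammingDist y x = 1; rwa [hammingDist_comm]⟩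
  loopless := ⟨fun x h => by simp [hammingDist_self] at h⟩

/-- `G` is `k`-connected: it has more than `k` vertices and remains connected after
removing any set of fewer than `k` vertices. -/
def KConnected {V : Type*} (G : SimpleGraph V) (k : ℕ) : Prop :=
  k < Nat.card V ∧
  ∀ s : Finset V, s.card < k → ((G.induce ((↑s : Set V)ᶜ))).Connected

/-- `G` is `k`-regular: every vertex has exactly `k` neighbours. -/
def IsKRegular {V : Type*} (G : SimpleGraph V) (k : ℕ) : Prop :=
  ∀ v : V, (G.neighborSet v).ncard = k

section AuxWalk

variable {V : Type*} {T : SimpleGraph V}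

/-- In an acyclic graph, a common neighbour `v` of `a ≠ b` lies on every walk from `a`
to `b`. -/
lemma sep_of_adj_adj [DecidableEq V] (hT : T.IsAcyclic) {v a b : V} (h1 : T.Adj v a)
    (h2 : T.Adj v b) (hab : a ≠ b) : ∀ p : T.Walk a b, v ∈ p.support := by
  intro p
  have hq : (Walk.cons h1.symm (Walk.cons h2 Walk.nil)).IsPath := by
    simp [Walk.isPath_def, h1.ne', h2.ne, hab]
  have h := hT.path_unique p.toPath ⟨_, hq⟩
  have hv : v ∈ (p.toPath : T.Walk a b).support := by rw [h]; simp
  exact p.support_toPath_subset hv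

lemma sep_trans_avoid {v x y z : V} (hs : ∀ p : T.Walk x y, v ∈ p.support)
    (ha : ∃ p : T.Walk x z, v ∉ p.support) : ∀ q : T.Walk z y, v ∈ q.support := by
  intro q; by_contra hq
  obtain ⟨p, hp⟩ := ha
  have h := hs (p.append q)
  rw [SimpleGraph.Walk.mem_support_append_iff] at h
  tauto

lemma sep_pick {v a b : V} (hs : ∀ p : T.Walk a b, v ∈ p.support) (c : V) :
    (∀ p : T.Walk c a, v ∈ p.support) ∨ (∀ p : T.Walk c b, v ∈ p.support) := by
  by_contra h
  push_neg at h
  obtain ⟨⟨p, hp⟩, ⟨q, hq⟩⟩ := h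
  have h2 := hs (p.reverse.append q)
  rw [SimpleGraph.Walk.mem_support_append_iff, SimpleGraph.Walk.support_reverse,
    List.mem_reverse] at h2
  tauto

lemma sep_rev {v x y : V} (hs : ∀ p : T.Walk x y, v ∈ p.support) :
    ∀ p : T.Walk y x, v ∈ p.support := fun p => by
  have h := hs p.reverse
  rwa [SimpleGraph.Walk.support_reverse, List.mem_reverse] at h

end AuxWalk

section AuxCIST

variable {V : Type*}

/-- Completely independent spanning trees are pairwise edge-disjoint. -/
lemma cists_edge_disjoint {k : ℕ} {G : SimpleGraph V} {T : Fin k → SimpleGraph V}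
    (hC : AreCISTs G T) {i j : Fin k} (hij : i ≠ j) {a b : V}
    (hi : (T i).Adj a b) (hj : (T j).Adj a b) : False := by
  have hp : (SimpleGraph.Walk.cons hi SimpleGraph.Walk.nil).IsPath := by
    simp [Walk.isPath_def, hi.ne]
  have hq : (SimpleGraph.Walk.cons hj SimpleGraph.Walk.nil).IsPath := by
    simp [Walk.isPath_def, hj.ne]
  have h := (hC.2 a b hi.ne i j hij _ _ hp hq).1 s(a,b) (by simp)
  exact h (by simp)

/-- A vertex cannot be an internal (degree ≥ 2) vertex of two distinct completely
independent spanning trees. -/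
lemma cists_inner_unique {k : ℕ} {G : SimpleGraph V} {T : Fin k → SimpleGraph V}
    (hC : AreCISTs G T) {i j : Fin k} (hij : i ≠ j) {v a b c d : V}
    (ha : (T i).Adj v a) (hb : (T i).Adj v b) (hab : a ≠ b)
    (hc : (T j).Adj v c) (hd : (T j).Adj v d) (hcd : c ≠ d) : False := by
  classical
  have getPath : ∀ (m : Fin k) (x y : V), ∃ p : (T m).Walk x y, p.IsPath := by
    intro m x y
    obtain ⟨w⟩ := ((hC.1 m).2.isConnected) x y
    exact ⟨w.toPath, w.toPath.2⟩
  have avoidI : ∃ p : (T i).Walk c d, v ∉ p.support := by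
    obtain ⟨p, hp⟩ := getPath i c d
    have hqpath : (SimpleGraph.Walk.cons hc.symm
        (SimpleGraph.Walk.cons hd SimpleGraph.Walk.nil)).IsPath := by
      simp [Walk.isPath_def, hc.ne', hd.ne, hcd]
    refine ⟨p, fun hv => ?_⟩
    have h := (hC.2 c d hcd i j hij p _ hp hqpath).2 v hv (by simp)
    rcases h with h | h
    · exact hc.ne h
    · exact hd.ne h
  have sepI_ab := sep_of_adj_adj (hC.1 i).2.IsAcyclic ha hb hab
  have sepJ_cd := sep_of_adj_adj (hC.1 j).2.IsAcyclic hc hd hcd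
  obtain ⟨w, hwadj, hsepcw⟩ : ∃ w, (T i).Adj v w ∧ ∀ p : (T i).Walk c w, v ∈ p.support := by
    rcases sep_pick sepI_ab c with h | h
    · exact ⟨a, ha, h⟩
    · exact ⟨b, hb, h⟩
  have hsepdw : ∀ p : (T i).Walk d w, v ∈ p.support := sep_trans_avoid hsepcw avoidI
  obtain ⟨z, hz, hzadj, hsepwz⟩ :
      ∃ z, (z = c ∨ z = d) ∧ (T j).Adj v z ∧ ∀ p : (T j).Walk w z, v ∈ p.support := by
    rcases sep_pick sepJ_cd w with h | h
    · exact ⟨c, Or.inl rfl, hc, h⟩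
    · exact ⟨d, Or.inr rfl, hd, h⟩
  have hsepwz_i : ∀ p : (T i).Walk w z, v ∈ p.support := by
    rcases hz with rfl | rfl
    · exact sep_rev hsepcw
    · exact sep_rev hsepdw
  have hwz : w ≠ z := by
    rintro rfl
    have h := hsepwz SimpleGraph.Walk.nil
    simp only [Walk.support_nil, List.mem_singleton] at h
    exact hwadj.ne h
  obtain ⟨p, hp⟩ := getPath i w z
  obtain ⟨q, hq⟩ := getPath j w z
  have h := (hC.2 w z hwz i j hij p q hp hq).2 v (hsepwz_i p) (hsepwz q)
  rcases h with h | h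
  · exact hwadj.ne h
  · exact hzadj.ne h

/-- One-sided handshake: if every edge of `H` has exactly one endpoint in `s`, then the sum
of the degrees over `s` equals the number of edges. -/
lemma aux_sum_degree_side [Fintype V] [DecidableEq V] (H : SimpleGraph V) [DecidableRel H.Adj]
    (s : Finset V) (hs : ∀ ⦃a b⦄, H.Adj a b → (a ∈ s ↔ b ∉ s)) :
    ∑ v ∈ s, H.degree v = H.edgeFinset.card := by
  have h1 : ∑ v ∈ s, H.degree v = (Finset.univ.filter (fun d : H.Dart => d.fst ∈ s)).card := by
    rw [Finset.card_eq_sum_card_fiberwise (f := fun d : H.Dart => d.fst) (t := s) (by intro d hd; simpa using hd)]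
    refine Finset.sum_congr rfl fun v hv => ?_
    rw [← SimpleGraph.dart_fst_fiber_card_eq_degree]
    congr 1
    ext d
    simp only [Finset.mem_filter, Finset.mem_univ, true_and]
    constructor
    · intro h; exact ⟨by rw [h]; exact hv, h⟩
    · tauto
  rw [h1]
  apply Finset.card_bij (fun d _ => d.edge)
  · intro d hd
    rw [SimpleGraph.mem_edgeFinset]
    exact d.edge_mem
  · intro d1 h1 d2 h2 he
    rcases (SimpleGraph.dart_edge_eq_iff d1 d2).mp he with h | h
    · exact h
    · exfalso
      simp only [Finset.mem_filter] at h1 h2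
      have := hs d2.adj
      rw [h] at h1
      exact (this.mp h2.2) h1.2
  · intro e he
    rw [SimpleGraph.mem_edgeFinset] at he
    induction e with
    | h a b =>
      have hadj : H.Adj a b := he
      by_cases hax : a ∈ s
      · exact ⟨⟨(a,b), hadj⟩, by simpa using hax, rfl⟩
      · have hbx : b ∈ s := by
          have := hs hadj.symm
          tauto
        exact ⟨⟨(b,a), hadj.symm⟩, by simpa using hbx, Sym2.eq_swap⟩

end AuxCIST

/-- The 6-dimensional hypercube `Q₆` does not admit three completely independent
spanning trees. -/
theorem hypercube_six_no_three_cists :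
    ¬ ∃ T : Fin 3 → SimpleGraph (Fin 6 → ZMod 2), AreCISTs (hypercube 6) T := by
  classical
  rintro ⟨T, hC⟩
  have hcardV : Fintype.card (Fin 6 → ZMod 2) = 64 := by simp [Fintype.card_fun]
  -- the parity of the coordinate sum flips along each edge of the hypercube
  have hflip : ∀ x y : Fin 6 → ZMod 2, hammingDist x y = 1 → (∑ t, x t) = (∑ t, y t) + 1 := by
    intro x y h
    rw [hammingDist] at h
    obtain ⟨a, ha⟩ := Finset.card_eq_one.mp h
    have hmem : ∀ t : Fin 6, x t ≠ y t ↔ t = a := by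
      intro t
      rw [← Finset.mem_singleton, ← ha, Finset.mem_filter]
      simp
    have hxa : x a = y a + 1 := by
      have h1 : x a ≠ y a := (hmem a).mpr rfl
      revert h1; generalize x a = u; generalize y a = w; revert u w; decide
    rw [← Finset.add_sum_erase _ x (Finset.mem_univ a),
      ← Finset.add_sum_erase _ y (Finset.mem_univ a), hxa,
      Finset.sum_congr rfl (fun t ht => ?_)]
    · ring
    · by_contra hne
      exact (Finset.mem_erase.mp ht).1 ((hmem t).mp (fun he => hne he))
  -- the even-weight side of the bipartition
  set X := Finset.univ.filter (fun v : Fin 6 → ZMod 2 => ∑ t, v t = 0) with hXdef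
  have hXcard : X.card = 32 := by
    set Y := Finset.univ.filter (fun v : Fin 6 → ZMod 2 => ¬ ∑ t, v t = 0) with hY
    have hsum : ∀ v : Fin 6 → ZMod 2,
        (∑ t, Function.update v 0 (v 0 + 1) t) = (∑ t, v t) + 1 := by
      intro v
      rw [Finset.sum_update_of_mem (Finset.mem_univ 0),
        ← Finset.add_sum_erase _ v (Finset.mem_univ 0), Finset.erase_eq]
      ring
    have hinv : ∀ v : Fin 6 → ZMod 2, Function.update (Function.update v 0 (v 0 + 1)) 0
        (Function.update v 0 (v 0 + 1) 0 + 1) = v := by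
      intro v
      funext t
      have h2 : ∀ u : ZMod 2, u + 1 + 1 = u := by decide
      by_cases ht : t = 0
      · subst ht; simp [h2]
      · simp [Function.update_of_ne ht]
    have hcard : X.card = Y.card := by
      refine Finset.card_nbij' (fun v => Function.update v 0 (v 0 + 1))
        (fun v => Function.update v 0 (v 0 + 1)) ?_ ?_ ?_ ?_
      · intro v hv
        simp only [hY, Finset.mem_coe, Finset.mem_filter, Finset.mem_univ, true_and, hsum]
        simp only [hXdef, Finset.mem_coe, Finset.mem_filter] at hv
        rw [hv.2]
        decide
      · intro v hv
        simp only [hXdef, Finset.mem_coe, Finset.mem_filter, Finset.mem_univ, true_and, hsum]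
        simp only [hY, Finset.mem_coe, Finset.mem_filter, Finset.mem_univ, true_and] at hv
        revert hv; generalize (∑ t : Fin 6, v t) = u; revert u; decide
      · intro v _; exact hinv v
      · intro v _; exact hinv v
    have htot : X.card + Y.card = 64 := by
      rw [hXdef, hY, Finset.card_filter_add_card_filter_not]
      simp [Fintype.card_fun]
    omega
  -- degrees in the three trees
  set deg : Fin 3 → (Fin 6 → ZMod 2) → ℕ := fun i v => (T i).degree v with hdegdef
  have hdeg1 : ∀ i v, 1 ≤ deg i v := by
    intro i v
    have hnt : Nontrivial (Fin 6 → ZMod 2) :=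
      Fintype.one_lt_card_iff_nontrivial.mp (by rw [hcardV]; omega)
    obtain ⟨w, hw⟩ := exists_ne v
    obtain ⟨p⟩ := ((hC.1 i).2.isConnected) v w
    have : ∃ u, (T i).Adj v u := by
      cases p with
      | nil => exact absurd rfl (Ne.symm hw)
      | cons h q => exact ⟨_, h⟩
    exact (T i).degree_pos_iff_exists_adj v |>.mpr this
  have huniq : ∀ v i j, 2 ≤ deg i v → 2 ≤ deg j v → i = j := by
    intro v i j hi hj
    by_contra hij
    have hi' : 1 < ((T i).neighborFinset v).card := hi
    have hj' : 1 < ((T j).neighborFinset v).card := hj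
    obtain ⟨a, haa, b, hbb, hab⟩ := Finset.one_lt_card.mp hi'
    obtain ⟨c, hcc, d, hdd, hcd⟩ := Finset.one_lt_card.mp hj'
    rw [SimpleGraph.mem_neighborFinset] at haa hbb hcc hdd
    exact cists_inner_unique hC hij haa hbb hab hcc hdd hcd
  -- each vertex has total tree-degree at most 6
  have hsum6 : ∀ v, (∑ i, deg i v) ≤ 6 := by
    intro v
    have hQ6 : ((hypercube 6).neighborFinset v).card ≤ 6 := by
      have hsub : (hypercube 6).neighborFinset v ⊆
          Finset.univ.image (fun t : Fin 6 => Function.update v t (v t + 1)) := by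
        intro w hw
        rw [SimpleGraph.mem_neighborFinset] at hw
        have h : hammingDist v w = 1 := hw
        rw [hammingDist] at h
        obtain ⟨a, ha⟩ := Finset.card_eq_one.mp h
        have hmem : ∀ t : Fin 6, v t ≠ w t ↔ t = a := by
          intro t
          rw [← Finset.mem_singleton, ← ha, Finset.mem_filter]
          simp
        refine Finset.mem_image.mpr ⟨a, Finset.mem_univ a, funext fun t => ?_⟩
        by_cases ht : t = a
        · subst ht
          rw [Function.update_self]
          have h1 : v t ≠ w t := (hmem t).mpr rfl
          revert h1; generalize v t = u; generalize w t = u'; revert u u'; decide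
        · rw [Function.update_of_ne ht]
          by_contra hne
          exact ht ((hmem t).mp hne)
      calc ((hypercube 6).neighborFinset v).card
          ≤ _ := Finset.card_le_card hsub
        _ ≤ (Finset.univ : Finset (Fin 6)).card := Finset.card_image_le
        _ = 6 := by simp
    have hsub2 : ∀ i, (T i).neighborFinset v ⊆ (hypercube 6).neighborFinset v := by
      intro i w hw
      rw [SimpleGraph.mem_neighborFinset] at hw ⊢
      exact (hC.1 i).1 hw
    have hdisjN : ∀ i ∈ (Finset.univ : Finset (Fin 3)), ∀ j ∈ Finset.univ, i ≠ j →
        Disjoint ((T i).neighborFinset v) ((T j).neighborFinset v) := by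
      intro i _ j _ hij
      rw [Finset.disjoint_left]
      intro w hwi hwj
      rw [SimpleGraph.mem_neighborFinset] at hwi hwj
      exact cists_edge_disjoint hC hij hwi hwj
    have hbu : (∑ i, ((T i).neighborFinset v).card) =
        (Finset.univ.biUnion (fun i => (T i).neighborFinset v)).card :=
      (Finset.card_biUnion hdisjN).symm
    have hble : (Finset.univ.biUnion (fun i => (T i).neighborFinset v)).card ≤ 6 := by
      refine le_trans (Finset.card_le_card ?_) hQ6
      intro w hw
      obtain ⟨i, _, hwi⟩ := Finset.mem_biUnion.mp hw
      exact hsub2 i hwi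
    calc (∑ i, deg i v) = ∑ i, ((T i).neighborFinset v).card := rfl
      _ = _ := hbu
      _ ≤ 6 := hble
  -- one-sided handshake for each tree
  have hhand : ∀ i, (∑ v ∈ X, deg i v) = 63 := by
    intro i
    have hside : ∀ ⦃a b : Fin 6 → ZMod 2⦄, (T i).Adj a b → (a ∈ X ↔ b ∉ X) := by
      intro a b hab
      have hQ : (hypercube 6).Adj a b := (hC.1 i).1 hab
      have h := hflip a b hQ
      simp only [hXdef, Finset.mem_filter, Finset.mem_univ, true_and]
      rw [h]
      generalize (∑ t : Fin 6, b t) = u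
      revert u; decide
    have h63 : (T i).edgeFinset.card = 63 := by
      have := (hC.1 i).2.card_edgeFinset
      rw [hcardV] at this
      omega
    rw [← h63]
    exact aux_sum_degree_side (T i) X hside
  -- the sets of internal vertices in each tree, inside X
  set A : Fin 3 → Finset (Fin 6 → ZMod 2) := fun i => X.filter (fun v => 2 ≤ deg i v) with hAdef
  have hdegA : ∀ i, ∀ v ∈ A i, (∑ j, deg j v) = deg i v + 2 := by
    intro i v hv
    rw [← Finset.add_sum_erase _ _ (Finset.mem_univ i)]
    have h2 : (∑ j ∈ Finset.univ.erase i, deg j v) = 2 := by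
      rw [Finset.sum_const_nat (m := 1) ?_, Finset.card_erase_of_mem (Finset.mem_univ i)]
      · simp
      · intro j hj
        have hji : j ≠ i := (Finset.mem_erase.mp hj).1
        have hnj : ¬ 2 ≤ deg j v := fun h =>
          hji (huniq v j i h (Finset.mem_filter.mp hv).2)
        have := hdeg1 j v
        omega
    omega
  have hsumA : ∀ i, (∑ v ∈ A i, deg i v) = 31 + (A i).card := by
    intro i
    have hsplit := Finset.sum_filter_add_sum_filter_not X (fun v => 2 ≤ deg i v) (deg i)
    have hone : (∑ v ∈ X.filter (fun v => ¬ 2 ≤ deg i v), deg i v)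
        = (X.filter (fun v => ¬ 2 ≤ deg i v)).card := by
      rw [Finset.card_eq_sum_ones]
      refine Finset.sum_congr rfl fun v hv => ?_
      have h1 := hdeg1 i v
      have h2 := (Finset.mem_filter.mp hv).2
      omega
    have hcards := Finset.card_filter_add_card_filter_not
      (s := X) (p := fun v => 2 ≤ deg i v)
    beta_reduce at hcards
    rw [hone] at hsplit
    rw [hhand i] at hsplit
    rw [hXcard] at hcards
    have hle : (A i).card ≤ 32 := by
      rw [← hXcard, hAdef]; exact Finset.card_le_card (Finset.filter_subset _ _)
    simp only [hAdef] at *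
    omega
  -- deficiency of each tree on X is at least 2
  have hDlow : ∀ i, 2 ≤ ∑ v ∈ A i, (6 - ∑ j, deg j v) := by
    intro i
    have hrw : (∑ v ∈ A i, (6 - ∑ j, deg j v)) = ∑ v ∈ A i, (4 - deg i v) := by
      refine Finset.sum_congr rfl fun v hv => ?_
      rw [hdegA i v hv]
      omega
    have hd4 : ∀ v ∈ A i, deg i v ≤ 4 := by
      intro v hv
      have h1 := hsum6 v
      have h2 := hdegA i v hv
      omega
    have hadd : (∑ v ∈ A i, (4 - deg i v)) + (∑ v ∈ A i, deg i v) = 4 * (A i).card := by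
      rw [← Finset.sum_add_distrib,
        Finset.sum_const_nat (m := 4) (fun v hv => by have := hd4 v hv; omega)]
      ring
    rw [hrw]
    have hs := hsumA i
    omega
  -- total deficiency on X is exactly 3
  have htotdef : (∑ v ∈ X, (6 - ∑ j, deg j v)) = 3 := by
    have h1 : (∑ v ∈ X, (6 - ∑ j, deg j v)) + (∑ v ∈ X, ∑ j, deg j v) = 6 * 32 := by
      rw [← Finset.sum_add_distrib,
        Finset.sum_const_nat (m := 6) (fun v _ => by have := hsum6 v; omega), hXcard]
    have h2 : (∑ v ∈ X, ∑ j, deg j v) = 189 := by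
      rw [Finset.sum_comm]
      rw [Finset.sum_congr rfl (fun j _ => hhand j)]
      simp
    omega
  -- the sets A i are pairwise disjoint subsets of X
  have hAX : ∀ i, A i ⊆ X := fun i => Finset.filter_subset _ _
  have hAdisj : ∀ i ∈ (Finset.univ : Finset (Fin 3)), ∀ j ∈ Finset.univ, i ≠ j →
      Disjoint (A i) (A j) := by
    intro i _ j _ hij
    rw [Finset.disjoint_left]
    intro v hvi hvj
    exact hij (huniq v i j (Finset.mem_filter.mp hvi).2 (Finset.mem_filter.mp hvj).2)
  have hbig : (∑ i, ∑ v ∈ A i, (6 - ∑ j, deg j v)) ≤ ∑ v ∈ X, (6 - ∑ j, deg j v) := by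
    rw [← Finset.sum_biUnion (by
      intro i _ j _ hij
      exact hAdisj i (Finset.mem_univ i) j (Finset.mem_univ j) hij)]
    refine Finset.sum_le_sum_of_subset ?_
    intro v hv
    obtain ⟨i, _, hvi⟩ := Finset.mem_biUnion.mp hv
    exact hAX i hvi
  have hsix : 6 ≤ ∑ i, ∑ v ∈ A i, (6 - ∑ j, deg j v) := by
    rw [Fin.sum_univ_three]
    have h0 := hDlow 0
    have h1 := hDlow 1
    have h2 := hDlow 2
    omega
  omega
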